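/- Let 0 ≤ c̲ ≤ c̄ ≤ min P and let prices p^1, …, p^T be drawn independently with p^t ∼ π^t. For every ε > 0, Pr[ ∃ c ∈ [c̲, c̄] : R̃^T(c) − R̄^T(c) ≤ −ε ] ≤ 2k²·exp( −ε² / (2k² Σ_{t=1}^T d_t²) ), where R̃^T(c) = Σ_{p∈P} max_{q∈P} R̃^T_{p,q}(c), R̄^T(c) = Σ_{p∈P} max_{q∈P} R̄^T_{p,q}(c), and d_t = (1/T)·(1/min_{p′∈C^t} π^t(p′) + 1)·p̄. -/

import Mathlib

open Finset

def IsPMF (P : Finset ℝ) (f : ℝ → ℝ) : Prop :=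
  (∀ p, 0 ≤ f p) ∧ (∑ p ∈ P, f p = 1) ∧ ∀ p, p ∉ P → f p = 0

noncomputable def suppF (P : Finset ℝ) (f : ℝ → ℝ) : Finset ℝ :=
  P.filter fun p => 0 < f p

def IsAllocSeq (P : Finset ℝ) {T : ℕ} (x : Fin T → ℝ → ℝ) : Prop :=
  ∀ t : Fin T, (∀ p ∈ P, x t p ∈ Set.Icc (0:ℝ) 1) ∧
    ∀ p ∈ P, ∀ q ∈ P, p ≤ q → x t q ≤ x t p

noncomputable def regret (P : Finset ℝ) (hP : P.Nonempty) {T : ℕ}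
    (π x : Fin T → ℝ → ℝ) (c : ℝ) : ℝ :=
  haveI : Nonempty {p : ℝ // p ∈ P} := Finset.nonempty_coe_sort.mpr hP
  Finset.univ.sup' Finset.univ_nonempty
    fun σ : {p : ℝ // p ∈ P} → {p : ℝ // p ∈ P} =>
      (T : ℝ)⁻¹ * ∑ t : Fin T, ∑ p ∈ P.attach,
        π t p.1 * (((σ p).1 - c) * x t (σ p).1 - (p.1 - c) * x t p.1)

noncomputable def pessA (P : Finset ℝ) {T : ℕ} (π x : Fin T → ℝ → ℝ)
    (t : Fin T) (p : ℝ) : ℝ :=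
  if p ∈ suppF P (π t) then x t p
  else if h : ((suppF P (π t)).filter fun r => r ≤ p).Nonempty then
    x t (((suppF P (π t)).filter fun r => r ≤ p).max' h)
  else 1

noncomputable def xhatF (P : Finset ℝ) {T : ℕ} (π x : Fin T → ℝ → ℝ)
    (t : Fin T) (s : ℝ) (p : ℝ) : ℝ :=
  if p ∈ suppF P (π t) then (if p = s then x t s / π t s else 0)
  else if h : ((suppF P (π t)).filter fun r => r ≤ p).Nonempty then
    (if ((suppF P (π t)).filter fun r => r ≤ p).max' h = s then x t s / π t s else 0)
  else 1

open Classical in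
noncomputable def probM (P : Finset ℝ) {T : ℕ} (π : Fin T → ℝ → ℝ)
    (E : (Fin T → ℝ) → Prop) : ℝ :=
  ∑ ps ∈ Fintype.piFinset (fun _ : Fin T => P),
    if E ps then ∏ t, π t (ps t) else 0

noncomputable def Rtilpq (P : Finset ℝ) {T : ℕ} (π x : Fin T → ℝ → ℝ)
    (c p q : ℝ) (ps : Fin T → ℝ) : ℝ :=
  (T : ℝ)⁻¹ * ∑ t : Fin T, π t p *
    ((q - c) * xhatF P π x t (ps t) q - (p - c) * xhatF P π x t (ps t) p)

noncomputable def Rbarpq (P : Finset ℝ) {T : ℕ} (π x : Fin T → ℝ → ℝ)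
    (c p q : ℝ) : ℝ :=
  (T : ℝ)⁻¹ * ∑ t : Fin T, π t p *
    ((q - c) * pessA P π x t q - (p - c) * pessA P π x t p)


section Aux

lemma xhat_exp (P : Finset ℝ) {T : ℕ} (π x : Fin T → ℝ → ℝ)
    (hpmf : ∀ t, IsPMF P (π t)) (t : Fin T) (p : ℝ) :
    ∑ s ∈ P, π t s * xhatF P π x t s p = pessA P π x t p := by
  classical
  by_cases hp : p ∈ suppF P (π t)
  · have hpP : p ∈ P := (Finset.mem_filter.mp hp).1
    have hppos : 0 < π t p := (Finset.mem_filter.mp hp).2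
    have hterm : ∀ s ∈ P, π t s * xhatF P π x t s p =
        (if p = s then π t s * (x t s / π t s) else 0) := by
      intro s _
      unfold xhatF
      rw [if_pos hp, mul_ite, mul_zero]
    rw [Finset.sum_congr rfl hterm, Finset.sum_ite_eq, if_pos hpP]
    unfold pessA
    rw [if_pos hp, mul_div_cancel₀ _ hppos.ne']
  · by_cases h : ((suppF P (π t)).filter fun r => r ≤ p).Nonempty
    · set r := ((suppF P (π t)).filter fun r => r ≤ p).max' h with hr
      have hrs : r ∈ suppF P (π t) :=
        (Finset.mem_filter.mp (Finset.max'_mem _ h)).1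
      have hrP : r ∈ P := (Finset.mem_filter.mp hrs).1
      have hrpos : 0 < π t r := (Finset.mem_filter.mp hrs).2
      have hterm : ∀ s ∈ P, π t s * xhatF P π x t s p =
          (if r = s then π t s * (x t s / π t s) else 0) := by
        intro s _
        unfold xhatF
        rw [if_neg hp, dif_pos h, mul_ite, mul_zero]
      rw [Finset.sum_congr rfl hterm, Finset.sum_ite_eq, if_pos hrP]
      unfold pessA
      rw [if_neg hp, dif_pos h, mul_div_cancel₀ _ hrpos.ne']
    · have hterm : ∀ s ∈ P, π t s * xhatF P π x t s p = π t s := by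
        intro s _
        unfold xhatF
        rw [if_neg hp, dif_neg h, mul_one]
      rw [Finset.sum_congr rfl hterm, (hpmf t).2.1]
      unfold pessA
      rw [if_neg hp, dif_neg h]

lemma inf_supp_pos (P : Finset ℝ) {T : ℕ} (π : Fin T → ℝ → ℝ)
    (hsupp : ∀ t, (suppF P (π t)).Nonempty) (t : Fin T) :
    0 < (suppF P (π t)).inf' (hsupp t) (π t) := by
  obtain ⟨s, hs, he⟩ := Finset.exists_mem_eq_inf' (hsupp t) (π t)
  rw [he]
  exact (Finset.mem_filter.mp hs).2

lemma pi_le_one (P : Finset ℝ) {T : ℕ} (π : Fin T → ℝ → ℝ)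
    (hpmf : ∀ t, IsPMF P (π t)) (t : Fin T) {s : ℝ} (hs : s ∈ P) :
    π t s ≤ 1 := by
  rw [← (hpmf t).2.1]
  exact Finset.single_le_sum (fun j _ => (hpmf t).1 j) hs

lemma pess_bound (P : Finset ℝ) {T : ℕ} (π x : Fin T → ℝ → ℝ)
    (hx : IsAllocSeq P x) (t : Fin T) (p : ℝ) :
    0 ≤ pessA P π x t p ∧ pessA P π x t p ≤ 1 := by
  unfold pessA
  split
  case isTrue hp =>
    have hpP : p ∈ P := (Finset.mem_filter.mp hp).1
    have := (hx t).1 p hpP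
    exact ⟨this.1, this.2⟩
  case isFalse hp =>
    split
    case isTrue h =>
      have hrs : _ ∈ suppF P (π t) :=
        (Finset.mem_filter.mp (Finset.max'_mem _ h)).1
      have hrP := (Finset.mem_filter.mp hrs).1
      have := (hx t).1 _ hrP
      exact ⟨this.1, this.2⟩
    case isFalse h => exact ⟨zero_le_one, le_refl 1⟩

lemma xhat_bound (P : Finset ℝ) {T : ℕ} (π x : Fin T → ℝ → ℝ)
    (hpmf : ∀ t, IsPMF P (π t)) (hsupp : ∀ t, (suppF P (π t)).Nonempty)
    (hx : IsAllocSeq P x) (t : Fin T) {s : ℝ} (hs : s ∈ P) (hπs : 0 < π t s)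
    (p : ℝ) :
    0 ≤ xhatF P π x t s p ∧
      xhatF P π x t s p ≤ 1 / ((suppF P (π t)).inf' (hsupp t) (π t)) := by
  have hssupp : s ∈ suppF P (π t) := Finset.mem_filter.mpr ⟨hs, hπs⟩
  set m := (suppF P (π t)).inf' (hsupp t) (π t) with hm
  have hmpos : 0 < m := inf_supp_pos P π hsupp t
  have hms : m ≤ π t s := Finset.inf'_le _ hssupp
  have hx01 := (hx t).1 s hs
  have hdiv : 0 ≤ x t s / π t s ∧ x t s / π t s ≤ 1 / m := by
    constructor
    · exact div_nonneg hx01.1 hπs.le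
    · apply div_le_div₀ zero_le_one hx01.2 hmpos hms
  have h1m : (1:ℝ) ≤ 1 / m := by
    rw [le_div_iff₀ hmpos, one_mul]
    exact hms.trans (pi_le_one P π hpmf t hs)
  have h0m : (0:ℝ) ≤ 1 / m := by positivity
  unfold xhatF
  split
  · split
    · exact hdiv
    · exact ⟨le_refl 0, h0m⟩
  · split
    · split
      · exact hdiv
      · exact ⟨le_refl 0, h0m⟩
    · exact ⟨zero_le_one, h1m⟩

end Aux

lemma probM_union {ι : Type} (P : Finset ℝ) {T : ℕ} (π : Fin T → ℝ → ℝ)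
    (hpmf : ∀ t, IsPMF P (π t)) (E : (Fin T → ℝ) → Prop)
    (s : Finset ι) (F : ι → (Fin T → ℝ) → Prop)
    (h : ∀ ps, E ps → ∃ i ∈ s, F i ps) :
    probM P π E ≤ ∑ i ∈ s, probM P π (F i) := by
  classical
  unfold probM
  rw [Finset.sum_comm]
  apply Finset.sum_le_sum
  intro ps _
  have hnn : ∀ j ∈ s, (0:ℝ) ≤ if F j ps then ∏ t, π t (ps t) else 0 := by
    intro j _
    split
    · exact Finset.prod_nonneg fun t _ => (hpmf t).1 (ps t)
    · exact le_refl 0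
  by_cases hE : E ps
  · obtain ⟨i, hi, hFi⟩ := h ps hE
    rw [if_pos hE]
    refine le_trans (le_of_eq ?_) (Finset.single_le_sum hnn hi)
    rw [if_pos hFi]
  · rw [if_neg hE]
    exact Finset.sum_nonneg hnn

lemma mgf_aux (S : Finset ℝ) (w y : ℝ → ℝ) (a l : ℝ) (ha : 0 < a)
    (hw : ∀ s ∈ S, 0 ≤ w s) (hw1 : ∑ s ∈ S, w s = 1)
    (hy : ∑ s ∈ S, w s * y s = 0)
    (hb : ∀ s ∈ S, w s ≠ 0 → |y s| ≤ a) :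
    ∑ s ∈ S, w s * Real.exp (l * y s) ≤ Real.exp (l ^ 2 * a ^ 2 / 2) := by
  have key : ∀ s ∈ S, w s * Real.exp (l * y s) ≤
      w s * (((a - y s) / (2 * a)) * Real.exp (-(l * a)) +
             ((a + y s) / (2 * a)) * Real.exp (l * a)) := by
    intro s hs
    rcases eq_or_ne (w s) 0 with h0 | h0
    · simp [h0]
    · have hys := abs_le.mp (hb s hs h0)
      have h1 : (0:ℝ) ≤ (a - y s) / (2 * a) := by
        apply div_nonneg <;> linarith
      have h2 : (0:ℝ) ≤ (a + y s) / (2 * a) := by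
        apply div_nonneg <;> linarith
      have h3 : (a - y s) / (2 * a) + (a + y s) / (2 * a) = 1 := by
        field_simp; ring
      have conv := convexOn_exp.2 (Set.mem_univ (-(l * a))) (Set.mem_univ (l * a))
        h1 h2 h3
      simp only [smul_eq_mul] at conv
      have harg : (a - y s) / (2 * a) * (-(l * a)) + (a + y s) / (2 * a) * (l * a)
          = l * y s := by
        rw [div_mul_eq_mul_div, div_mul_eq_mul_div, ← add_div]
        rw [div_eq_iff (by positivity : (2*a) ≠ 0)]
        ring
      rw [harg] at conv
      exact mul_le_mul_of_nonneg_left conv (hw s hs)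
  have step := Finset.sum_le_sum key
  refine step.trans ?_
  have expand : ∀ s ∈ S, w s * (((a - y s) / (2 * a)) * Real.exp (-(l * a)) +
             ((a + y s) / (2 * a)) * Real.exp (l * a)) =
      ((Real.exp (-(l * a)) + Real.exp (l * a)) / 2) * w s +
      ((Real.exp (l * a) - Real.exp (-(l * a))) / (2 * a)) * (w s * y s) := by
    intro s _
    field_simp
    ring
  rw [Finset.sum_congr rfl expand, Finset.sum_add_distrib, ← Finset.mul_sum,
    ← Finset.mul_sum, hw1, hy, mul_one, mul_zero, add_zero]
  have : (Real.exp (-(l * a)) + Real.exp (l * a)) / 2 = Real.cosh (l * a) := by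
    rw [Real.cosh_eq]; ring
  rw [this]
  refine (Real.cosh_le_exp_half_sq (l * a)).trans (le_of_eq ?_)
  ring_nf

lemma chernoff (P : Finset ℝ) {T : ℕ} (hT : 1 ≤ T) (π : Fin T → ℝ → ℝ)
    (hpmf : ∀ t, IsPMF P (π t)) (Z : Fin T → ℝ → ℝ) (d : Fin T → ℝ)
    (hd : ∀ t, 0 < d t)
    (hmean : ∀ t, ∑ s ∈ P, π t s * Z t s = 0)
    (hb : ∀ t, ∀ s ∈ P, π t s ≠ 0 → |Z t s| ≤ d t)
    (ε : ℝ) (hε : 0 < ε) :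
    probM P π (fun ps => ∑ t, Z t (ps t) ≤ -ε) ≤
      Real.exp (-(ε ^ 2) / (2 * ∑ t, (d t) ^ 2)) := by
  classical
  haveI : Nonempty (Fin T) := ⟨⟨0, hT⟩⟩
  set D := ∑ t, (d t) ^ 2 with hD
  have hDpos : 0 < D := Finset.sum_pos (fun t _ => by have := hd t; positivity)
    Finset.univ_nonempty
  set l := ε / D with hl
  have hlpos : 0 < l := by positivity
  have step1 : probM P π (fun ps => ∑ t, Z t (ps t) ≤ -ε) ≤
      ∑ ps ∈ Fintype.piFinset (fun _ : Fin T => P),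
        (∏ t, π t (ps t)) * Real.exp (-(l * ε)) * Real.exp (∑ t, -l * Z t (ps t)) := by
    unfold probM
    apply Finset.sum_le_sum
    intro ps _
    have hprod : (0:ℝ) ≤ ∏ t, π t (ps t) :=
      Finset.prod_nonneg fun t _ => (hpmf t).1 (ps t)
    split
    case isTrue h =>
      have h1 : (1:ℝ) ≤ Real.exp (-(l * ε)) * Real.exp (∑ t, -l * Z t (ps t)) := by
        rw [← Real.exp_add, ← Real.exp_zero]
        apply Real.exp_le_exp.mpr
        have : ∑ t, -l * Z t (ps t) = -l * ∑ t, Z t (ps t) := by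
          rw [Finset.mul_sum]
        rw [this]
        nlinarith
      nlinarith
    case isFalse h =>
      have := Real.exp_pos (-(l * ε))
      have := Real.exp_pos (∑ t, -l * Z t (ps t))
      positivity
  have step2 : ∑ ps ∈ Fintype.piFinset (fun _ : Fin T => P),
        (∏ t, π t (ps t)) * Real.exp (-(l * ε)) * Real.exp (∑ t, -l * Z t (ps t)) =
      Real.exp (-(l * ε)) * ∏ t, ∑ s ∈ P, π t s * Real.exp (-l * Z t s) := by
    rw [Finset.prod_univ_sum, Finset.mul_sum]
    apply Finset.sum_congr rfl
    intro ps _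
    rw [Real.exp_sum, Finset.prod_mul_distrib]
    ring
  have step3 : ∀ t : Fin T, ∑ s ∈ P, π t s * Real.exp (-l * Z t s) ≤
      Real.exp (l ^ 2 * (d t) ^ 2 / 2) := by
    intro t
    have := mgf_aux P (π t) (Z t) (d t) (-l) (hd t)
      (fun s _ => (hpmf t).1 s) (hpmf t).2.1 (hmean t) (hb t)
    simpa using this
  have step4 : ∏ t, ∑ s ∈ P, π t s * Real.exp (-l * Z t s) ≤
      Real.exp (l ^ 2 * D / 2) := by
    have : Real.exp (l ^ 2 * D / 2) = ∏ t, Real.exp (l ^ 2 * (d t) ^ 2 / 2) := by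
      rw [← Real.exp_sum]
      congr 1
      rw [hD, Finset.mul_sum, Finset.sum_div]
    rw [this]
    apply Finset.prod_le_prod
    · intro t _
      apply Finset.sum_nonneg
      intro s hs
      exact mul_nonneg ((hpmf t).1 s) (Real.exp_pos _).le
    · exact fun t _ => step3 t
  calc probM P π (fun ps => ∑ t, Z t (ps t) ≤ -ε)
      ≤ Real.exp (-(l * ε)) * ∏ t, ∑ s ∈ P, π t s * Real.exp (-l * Z t s) := by
        rw [← step2]; exact step1
    _ ≤ Real.exp (-(l * ε)) * Real.exp (l ^ 2 * D / 2) :=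
        mul_le_mul_of_nonneg_left step4 (Real.exp_pos _).le
    _ = Real.exp (-(ε ^ 2) / (2 * D)) := by
        rw [← Real.exp_add]
        congr 1
        rw [hl]
        field_simp
        ring

lemma bnd_aux (w a b u v B M : ℝ) (h0 : 0 ≤ w) (h1 : w ≤ 1)
    (ha0 : 0 ≤ a) (hab : a ≤ B) (hb0 : 0 ≤ b) (hbb : b ≤ B)
    (hu : 0 ≤ u) (huM : u ≤ M) (hv : 0 ≤ v) (hvM : v ≤ M)
    (hBp : 0 ≤ B) (hMp : 0 ≤ M) : |w * (a * u - b * v)| ≤ B * M := by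
  rw [abs_le]
  constructor
  · nlinarith [mul_le_mul hbb hvM hv hBp,
      mul_le_mul_of_nonneg_right h1 (mul_nonneg hb0 hv),
      mul_nonneg h0 (mul_nonneg ha0 hu)]
  · nlinarith [mul_le_mul hab huM hu hBp,
      mul_le_mul_of_nonneg_right h1 (mul_nonneg ha0 hu),
      mul_nonneg h0 (mul_nonneg hb0 hv)]

lemma pair_bound (P : Finset ℝ) (hP : P.Nonempty) (hpos : ∀ p ∈ P, 0 < p)
    {T : ℕ} (hT : 1 ≤ T) (π : Fin T → ℝ → ℝ)
    (hpmf : ∀ t, IsPMF P (π t)) (hsupp : ∀ t, (suppF P (π t)).Nonempty)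
    (x : Fin T → ℝ → ℝ) (hx : IsAllocSeq P x)
    (p q c : ℝ) (hp : p ∈ P) (hq : q ∈ P) (hc0 : 0 ≤ c) (hcm : c ≤ P.min' hP)
    (ε' : ℝ) (hε' : 0 < ε') :
    probM P π (fun ps => Rtilpq P π x c p q ps - Rbarpq P π x c p q ≤ -ε') ≤
      Real.exp (-(ε' ^ 2) / (2 * ∑ t : Fin T,
        ((T : ℝ)⁻¹ * (1 / ((suppF P (π t)).inf' (hsupp t) (π t)) + 1) *
          P.max' hP) ^ 2)) := by
  classical
  haveI : Nonempty (Fin T) := ⟨⟨0, hT⟩⟩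
  have hTpos : (0:ℝ) < (T:ℝ) := by exact_mod_cast hT
  set pbar := P.max' hP with hpbar
  have hpbarpos : 0 < pbar := hpos _ (P.max'_mem hP)
  set m : Fin T → ℝ := fun t => (T:ℝ)⁻¹ * (π t p *
      ((q - c) * pessA P π x t q - (p - c) * pessA P π x t p)) with hm
  set Z : Fin T → ℝ → ℝ := fun t s => (T:ℝ)⁻¹ * (π t p *
      ((q - c) * xhatF P π x t s q - (p - c) * xhatF P π x t s p)) - m t
    with hZ
  set d : Fin T → ℝ := fun t =>
      (T : ℝ)⁻¹ * (1 / ((suppF P (π t)).inf' (hsupp t) (π t)) + 1) * pbar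
    with hd'
  have heq : (fun ps : Fin T → ℝ =>
      Rtilpq P π x c p q ps - Rbarpq P π x c p q ≤ -ε') =
      (fun ps => ∑ t, Z t (ps t) ≤ -ε') := by
    funext ps
    congr 1
    unfold Rtilpq Rbarpq
    rw [Finset.mul_sum, Finset.mul_sum, ← Finset.sum_sub_distrib]
  rw [heq]
  apply chernoff P hT π hpmf Z d _ _ _ ε' hε'
  · intro t
    have hMpos : 0 < 1 / ((suppF P (π t)).inf' (hsupp t) (π t)) := by
      have := inf_supp_pos P π hsupp t
      positivity
    rw [hd']
    have : (0:ℝ) < (T:ℝ)⁻¹ := by positivity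
    positivity
  · intro t
    have e1 := xhat_exp P π x hpmf t q
    have e2 := xhat_exp P π x hpmf t p
    have hterm : ∀ s ∈ P, π t s * Z t s =
        ((T:ℝ)⁻¹ * π t p * (q - c)) * (π t s * xhatF P π x t s q) -
        ((T:ℝ)⁻¹ * π t p * (p - c)) * (π t s * xhatF P π x t s p) -
        m t * π t s := by
      intro s _
      rw [hZ]
      ring
    rw [Finset.sum_congr rfl hterm]
    rw [Finset.sum_sub_distrib, Finset.sum_sub_distrib, ← Finset.mul_sum,
      ← Finset.mul_sum, ← Finset.mul_sum, e1, e2, (hpmf t).2.1, hm]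
    ring
  · intro t s hs hπs
    have hπspos : 0 < π t s := lt_of_le_of_ne ((hpmf t).1 s) (Ne.symm hπs)
    set M := 1 / ((suppF P (π t)).inf' (hsupp t) (π t)) with hM
    have hMpos : 0 < M := by
      have := inf_supp_pos P π hsupp t
      positivity
    set u := xhatF P π x t s q with hu
    set v := xhatF P π x t s p with hv
    set wq := pessA P π x t q with hwq'
    set wp := pessA P π x t p with hwp'
    have hxq := xhat_bound P π x hpmf hsupp hx t hs hπspos q
    have hxp := xhat_bound P π x hpmf hsupp hx t hs hπspos p
    have hwq := pess_bound P π x hx t q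
    have hwp := pess_bound P π x hx t p
    rw [← hu] at hxq
    rw [← hv] at hxp
    rw [← hwq'] at hwq
    rw [← hwp'] at hwp
    rw [← hM] at hxq hxp
    have hπp0 : 0 ≤ π t p := (hpmf t).1 p
    have hπp1 : π t p ≤ 1 := pi_le_one P π hpmf t hp
    have hqc0 : 0 ≤ q - c := by
      have := P.min'_le q hq
      linarith
    have hqcb : q - c ≤ pbar := by
      have := P.le_max' q hq
      linarith
    have hpc0 : 0 ≤ p - c := by
      have := P.min'_le p hp
      linarith
    have hpcb : p - c ≤ pbar := by
      have := P.le_max' p hp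
      linarith
    have hA : |π t p * ((q - c) * u - (p - c) * v)| ≤ pbar * M :=
      bnd_aux _ _ _ _ _ _ _ hπp0 hπp1 hqc0 hqcb hpc0 hpcb hxq.1 hxq.2
        hxp.1 hxp.2 hpbarpos.le hMpos.le
    have hB : |π t p * ((q - c) * wq - (p - c) * wp)| ≤ pbar := by
      have := bnd_aux _ _ _ _ _ _ _ hπp0 hπp1 hqc0 hqcb hpc0 hpcb hwq.1 hwq.2
        hwp.1 hwp.2 hpbarpos.le zero_le_one
      rwa [mul_one] at this
    have hTinv : (0:ℝ) < (T:ℝ)⁻¹ := by positivity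
    have hzeq : Z t s = (T:ℝ)⁻¹ * (π t p * ((q - c) * u - (p - c) * v)) -
        (T:ℝ)⁻¹ * (π t p * ((q - c) * wq - (p - c) * wp)) := by
      simp only [hZ, hm]
      rfl
    have habs : |Z t s| ≤ (T:ℝ)⁻¹ * (pbar * M) + (T:ℝ)⁻¹ * pbar := by
      rw [hzeq]
      refine (abs_sub _ _).trans ?_
      rw [abs_mul ((T:ℝ)⁻¹), abs_mul ((T:ℝ)⁻¹), abs_of_pos hTinv]
      exact add_le_add (mul_le_mul_of_nonneg_left hA hTinv.le)
        (mul_le_mul_of_nonneg_left hB hTinv.le)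
    refine habs.trans (le_of_eq ?_)
    rw [hd', hM]
    ring

/-- uniform (over all plausible costs `c ∈ [c̲, c̄]`) one-sided
concentration of the estimated regret below the pessimistic regret. -/
theorem estimated_regret_lower_concentration_uniform
    (P : Finset ℝ) (hP : P.Nonempty) (hpos : ∀ p ∈ P, 0 < p)
    {T : ℕ} (hT : 1 ≤ T) (π : Fin T → ℝ → ℝ)
    (hpmf : ∀ t, IsPMF P (π t)) (hsupp : ∀ t, (suppF P (π t)).Nonempty)
    (x : Fin T → ℝ → ℝ) (hx : IsAllocSeq P x)
    (clo chi : ℝ) (hclo : 0 ≤ clo) (hlohi : clo ≤ chi) (hchi : chi ≤ P.min' hP) :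
    ∀ ε : ℝ, 0 < ε →
      probM P π (fun ps => ∃ c ∈ Set.Icc clo chi,
          (∑ p ∈ P, P.sup' hP fun q => Rtilpq P π x c p q ps) -
            (∑ p ∈ P, P.sup' hP fun q => Rbarpq P π x c p q) ≤ -ε) ≤
        2 * (P.card : ℝ) ^ 2 * Real.exp (-(ε ^ 2) / (2 * (P.card : ℝ) ^ 2 *
          ∑ t : Fin T,
            ((T : ℝ)⁻¹ * (1 / ((suppF P (π t)).inf' (hsupp t) (π t)) + 1) *
              P.max' hP) ^ 2)) := by
  intro ε hε
  classical
  haveI : Nonempty (Fin T) := ⟨⟨0, hT⟩⟩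
  have hkpos : (0:ℝ) < (P.card : ℝ) := by exact_mod_cast Finset.card_pos.mpr hP
  set k : ℝ := (P.card : ℝ) with hk
  set D := ∑ t : Fin T, ((T : ℝ)⁻¹ *
      (1 / ((suppF P (π t)).inf' (hsupp t) (π t)) + 1) * P.max' hP) ^ 2 with hD
  have hDpos : 0 < D := by
    rw [hD]
    apply Finset.sum_pos _ Finset.univ_nonempty
    intro t _
    have h1 := inf_supp_pos P π hsupp t
    have h2 : (0:ℝ) < P.max' hP := hpos _ (P.max'_mem hP)
    have h3 : (0:ℝ) < (T:ℝ)⁻¹ := by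
      have : (0:ℝ) < (T:ℝ) := by exact_mod_cast hT
      positivity
    positivity
  have hεk : 0 < ε / k := by positivity
  have himpl : ∀ ps : Fin T → ℝ,
      (∃ c ∈ Set.Icc clo chi,
        (∑ p ∈ P, P.sup' hP fun q => Rtilpq P π x c p q ps) -
          (∑ p ∈ P, P.sup' hP fun q => Rbarpq P π x c p q) ≤ -ε) →
      ∃ i ∈ P ×ˢ P ×ˢ ({clo, chi} : Finset ℝ),
        Rtilpq P π x i.2.2 i.1 i.2.1 ps - Rbarpq P π x i.2.2 i.1 i.2.1
          ≤ -(ε / k) := by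
    rintro ps ⟨c, ⟨hc1, hc2⟩, hev⟩
    choose qf hqf1 hqf2 using fun p : ℝ =>
      Finset.exists_mem_eq_sup' hP (fun q => Rbarpq P π x c p q)
    have hsum : ∑ p ∈ P,
        (Rtilpq P π x c p (qf p) ps - Rbarpq P π x c p (qf p)) ≤ -ε := by
      rw [Finset.sum_sub_distrib]
      have l1 : ∑ p ∈ P, Rtilpq P π x c p (qf p) ps ≤
          ∑ p ∈ P, P.sup' hP fun q => Rtilpq P π x c p q ps :=
        Finset.sum_le_sum fun p _ =>
          Finset.le_sup' (f := fun q => Rtilpq P π x c p q ps) (hqf1 p)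
      have l2 : ∑ p ∈ P, Rbarpq P π x c p (qf p) =
          ∑ p ∈ P, P.sup' hP fun q => Rbarpq P π x c p q :=
        Finset.sum_congr rfl fun p _ => (hqf2 p).symm
      rw [l2]
      linarith
    have hex : ∃ p₀ ∈ P,
        Rtilpq P π x c p₀ (qf p₀) ps - Rbarpq P π x c p₀ (qf p₀) ≤ -(ε/k) := by
      by_contra hcon
      push_neg at hcon
      have hlt := Finset.sum_lt_sum_of_nonempty hP
        (f := fun _ => -(ε/k)) (fun p hp => hcon p hp)
      rw [Finset.sum_const, nsmul_eq_mul] at hlt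
      have hcard : (P.card : ℝ) * (-(ε/k)) = -ε := by
        field_simp
        ring
      rw [hcard] at hlt
      linarith
    obtain ⟨p₀, hp₀, hval⟩ := hex
    set q₀ := qf p₀ with hq₀
    have hq₀P : q₀ ∈ P := hqf1 p₀
    set Bv := (T:ℝ)⁻¹ * ∑ t, π t p₀ *
        (xhatF P π x t (ps t) p₀ - xhatF P π x t (ps t) q₀ -
         pessA P π x t p₀ + pessA P π x t q₀) with hBv
    have lin : ∀ c1 c2 : ℝ,
        (Rtilpq P π x c1 p₀ q₀ ps - Rbarpq P π x c1 p₀ q₀) -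
        (Rtilpq P π x c2 p₀ q₀ ps - Rbarpq P π x c2 p₀ q₀) =
        (c1 - c2) * Bv := by
      intro c1 c2
      rw [hBv]
      unfold Rtilpq Rbarpq
      simp only [Finset.mul_sum, ← Finset.sum_sub_distrib]
      apply Finset.sum_congr rfl
      intro t _
      ring
    rcases le_or_gt 0 Bv with hBs | hBs
    · refine ⟨(p₀, q₀, clo), ?_, ?_⟩
      · exact Finset.mem_product.mpr ⟨hp₀, Finset.mem_product.mpr
          ⟨hq₀P, Finset.mem_insert_self _ _⟩⟩
      · show Rtilpq P π x clo p₀ q₀ ps - Rbarpq P π x clo p₀ q₀ ≤ -(ε/k)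
        have hl := lin clo c
        have hmul : (clo - c) * Bv ≤ 0 :=
          mul_nonpos_of_nonpos_of_nonneg (by linarith) hBs
        linarith
    · refine ⟨(p₀, q₀, chi), ?_, ?_⟩
      · refine Finset.mem_product.mpr ⟨hp₀, Finset.mem_product.mpr ⟨hq₀P, ?_⟩⟩
        simp
      · show Rtilpq P π x chi p₀ q₀ ps - Rbarpq P π x chi p₀ q₀ ≤ -(ε/k)
        have hl := lin chi c
        have hmul : (chi - c) * Bv ≤ 0 :=
          mul_nonpos_of_nonneg_of_nonpos (by linarith) hBs.le
        linarith
  refine le_trans (probM_union P π hpmf _ (P ×ˢ P ×ˢ ({clo, chi} : Finset ℝ))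
    (fun i ps => Rtilpq P π x i.2.2 i.1 i.2.1 ps -
      Rbarpq P π x i.2.2 i.1 i.2.1 ≤ -(ε / k)) himpl) ?_
  have hcc : ∀ i ∈ P ×ˢ P ×ˢ ({clo, chi} : Finset ℝ),
      probM P π (fun ps => Rtilpq P π x i.2.2 i.1 i.2.1 ps -
        Rbarpq P π x i.2.2 i.1 i.2.1 ≤ -(ε / k)) ≤
      Real.exp (-((ε/k) ^ 2) / (2 * D)) := by
    intro i hi
    rw [Finset.mem_product] at hi
    obtain ⟨hi1, hi2⟩ := hi
    rw [Finset.mem_product] at hi2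
    have hc02 : 0 ≤ i.2.2 ∧ i.2.2 ≤ P.min' hP := by
      rcases Finset.mem_insert.mp hi2.2 with h | h
      · rw [h]; exact ⟨hclo, le_trans hlohi hchi⟩
      · rw [Finset.mem_singleton] at h
        rw [h]; exact ⟨le_trans hclo hlohi, hchi⟩
    rw [hD]
    exact pair_bound P hP hpos hT π hpmf hsupp x hx i.1 i.2.1 i.2.2
      hi1 hi2.1 hc02.1 hc02.2 (ε/k) hεk
  refine le_trans (Finset.sum_le_sum hcc) ?_
  rw [Finset.sum_const, nsmul_eq_mul]
  have hBexp : Real.exp (-((ε/k) ^ 2) / (2 * D)) =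
      Real.exp (-(ε ^ 2) / (2 * k ^ 2 * D)) := by
    congr 1
    rw [div_pow]
    field_simp
  rw [hBexp]
  apply mul_le_mul_of_nonneg_right _ (Real.exp_pos _).le
  rw [Finset.card_product, Finset.card_product]
  push_cast
  have h2 : (({clo, chi} : Finset ℝ).card : ℝ) ≤ 2 := by
    have h := Finset.card_insert_le clo ({chi} : Finset ℝ)
    rw [Finset.card_singleton] at h
    exact_mod_cast h
  have h2n : (0:ℝ) ≤ (({clo, chi} : Finset ℝ).card : ℝ) := by positivity
  nlinarith [hkpos.le]
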